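/- arXiv:1403.0562 — 2 statements merged into one kernel-verified Lean document; each statement's English description precedes it below -/
import Mathlib

section
/- Let K be an algebraically closed field of characteristic 0 or at least 5. Every nonsingular quartic form F over K whose automorphism group Aut(F) is isomorphic to the Klein four group C₂ × C₂ is K-equivalent to a Ciani quartic x⁴ + y⁴ + z⁴ + r·x²y² + s·y²z² + t·z²x² for some r, s, t ∈ K. -/
open MvPolynomial Matrix

noncomputable section

variable {K : Type} [Field K]

/-- The substitution of the linear change of variables given by a 3×3 matrix `M`
into a polynomial `F` in three variables, i.e. `F(M·(x,y,z)ᵗ)`. -/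
def matAct (M : Matrix (Fin 3) (Fin 3) K) (F : MvPolynomial (Fin 3) K) :
    MvPolynomial (Fin 3) K :=
  bind₁ (fun i => ∑ j, C (M i j) * X j) F

theorem matAct_one (F : MvPolynomial (Fin 3) K) : matAct 1 F = F := by
  have h : (fun i => ∑ j, C ((1 : Matrix (Fin 3) (Fin 3) K) i j) * X j)
      = (X : Fin 3 → MvPolynomial (Fin 3) K) := by
    funext i
    simp [Matrix.one_apply, apply_ite (C (σ := Fin 3) (R := K))]
  rw [matAct, h, bind₁_X_left, AlgHom.id_apply]

theorem matAct_mul (M N : Matrix (Fin 3) (Fin 3) K) (F : MvPolynomial (Fin 3) K) :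
    matAct (M * N) F = matAct N (matAct M F) := by
  have h : (fun i => (bind₁ fun i => ∑ j, C (N i j) * X j)
        ((fun i => ∑ j, C (M i j) * X j) i))
      = fun i => ∑ j, C ((M * N) i j) * (X j : MvPolynomial (Fin 3) K) := by
    funext i
    simp only [map_sum, _root_.map_mul, algHom_C, bind₁_X_right, Matrix.mul_apply,
      Finset.sum_mul, Finset.mul_sum, mul_assoc]
    exact Finset.sum_comm
  rw [matAct, matAct, matAct, bind₁_bind₁, h]

theorem matAct_smul (M : Matrix (Fin 3) (Fin 3) K) (c : K) (F : MvPolynomial (Fin 3) K) :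
    matAct M (c • F) = c • matAct M F := by
  simp [matAct]

/-- The group of matrices `A ∈ GL₃(K)` such that `F(A·(x,y,z)ᵗ) = λ·F` for some `λ ∈ Kˣ`. -/
def autGroup (F : MvPolynomial (Fin 3) K) : Subgroup (GL (Fin 3) K) where
  carrier := {A | ∃ c : Kˣ, matAct (A : Matrix (Fin 3) (Fin 3) K) F = (c : K) • F}
  one_mem' := ⟨1, by simp [Units.val_one, matAct_one]⟩
  mul_mem' := by
    rintro A B ⟨a, ha⟩ ⟨b, hb⟩
    refine ⟨a * b, ?_⟩
    calc matAct ((A * B : GL (Fin 3) K) : Matrix (Fin 3) (Fin 3) K) F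
        = matAct (B : Matrix (Fin 3) (Fin 3) K) (matAct (A : Matrix (Fin 3) (Fin 3) K) F) := by
          rw [Units.val_mul, matAct_mul]
      _ = (a : K) • matAct (B : Matrix (Fin 3) (Fin 3) K) F := by rw [ha, matAct_smul]
      _ = ((a * b : Kˣ) : K) • F := by rw [hb, smul_smul, Units.val_mul]
  inv_mem' := by
    rintro A ⟨a, ha⟩
    refine ⟨a⁻¹, ?_⟩
    rw [Units.val_inv_eq_inv_val, eq_inv_smul_iff₀ a.ne_zero]
    rw [← matAct_smul, ← ha, ← matAct_mul, ← Units.val_mul, mul_inv_cancel, Units.val_one,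
      matAct_one]

/-- The subgroup of scalar matrices inside `autGroup F`. -/
def scalarGroup (F : MvPolynomial (Fin 3) K) : Subgroup (autGroup F) where
  carrier := {A | ∃ c : Kˣ, ((A : GL (Fin 3) K) : Matrix (Fin 3) (Fin 3) K)
    = (c : K) • (1 : Matrix (Fin 3) (Fin 3) K)}
  one_mem' := ⟨1, by simp⟩
  mul_mem' := by
    rintro A B ⟨a, ha⟩ ⟨b, hb⟩
    refine ⟨a * b, ?_⟩
    push_cast
    rw [ha, hb, Matrix.smul_mul, Matrix.mul_smul, smul_smul, one_mul]
  inv_mem' := by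
    rintro A ⟨a, ha⟩
    refine ⟨a⁻¹, ?_⟩
    have h : ((A : GL (Fin 3) K) : Matrix (Fin 3) (Fin 3) K)
        * (((a⁻¹ : Kˣ) : K) • (1 : Matrix (Fin 3) (Fin 3) K)) = 1 := by
      rw [ha, Matrix.smul_mul, one_mul, smul_smul, ← Units.val_mul, mul_inv_cancel,
        Units.val_one, one_smul]
    calc (((A⁻¹ : autGroup F) : GL (Fin 3) K) : Matrix (Fin 3) (Fin 3) K)
        = (((A : GL (Fin 3) K) : Matrix (Fin 3) (Fin 3) K))⁻¹ := by
          rw [InvMemClass.coe_inv, Matrix.coe_units_inv]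
      _ = ((a⁻¹ : Kˣ) : K) • 1 := Matrix.inv_eq_right_inv h

instance scalarGroup_normal (F : MvPolynomial (Fin 3) K) : (scalarGroup F).Normal := by
  constructor
  rintro A ⟨a, ha⟩ g
  refine ⟨a, ?_⟩
  have hg : ((g : GL (Fin 3) K) : Matrix (Fin 3) (Fin 3) K)
      * (((g⁻¹ : autGroup F) : GL (Fin 3) K) : Matrix (Fin 3) (Fin 3) K) = 1 := by
    rw [InvMemClass.coe_inv, ← Units.val_mul, mul_inv_cancel, Units.val_one]
  show (((g * A * g⁻¹ : autGroup F) : GL (Fin 3) K) : Matrix (Fin 3) (Fin 3) K)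
      = (a : K) • (1 : Matrix (Fin 3) (Fin 3) K)
  rw [MulMemClass.coe_mul, MulMemClass.coe_mul, Units.val_mul, Units.val_mul, ha,
    Matrix.mul_smul, mul_one, Matrix.smul_mul, hg]

/-- The automorphism group of a plane quartic form: linear automorphisms up to scalars. -/
def projAut (F : MvPolynomial (Fin 3) K) : Type :=
  autGroup F ⧸ scalarGroup F

instance (F : MvPolynomial (Fin 3) K) : Group (projAut F) :=
  inferInstanceAs (Group (autGroup F ⧸ scalarGroup F))

/-- Nonsingularity of a ternary form: over an algebraic closure, the partial derivatives
have no common zero besides the origin. -/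
def QNonsingular (F : MvPolynomial (Fin 3) K) : Prop :=
  ∀ v : Fin 3 → AlgebraicClosure K,
    (∀ i, eval v (pderiv i (map (algebraMap K (AlgebraicClosure K)) F)) = 0) → v = 0

/-- Two ternary forms over `K` are `K`-equivalent if they differ by an invertible linear
change of variables, up to a nonzero scalar. -/
def kEquiv (F G : MvPolynomial (Fin 3) K) : Prop :=
  ∃ (A : GL (Fin 3) K) (c : Kˣ), matAct (A : Matrix (Fin 3) (Fin 3) K) F = (c : K) • G

lemma pderiv_bind₁ (f : Fin 3 → MvPolynomial (Fin 3) K) (F : MvPolynomial (Fin 3) K) (k : Fin 3) :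
    pderiv k (bind₁ f F) = ∑ i, bind₁ f (pderiv i F) * pderiv k (f i) := by
  induction F using MvPolynomial.induction_on with
  | C a => simp
  | add p q hp hq => simp [hp, hq, add_mul, Finset.sum_add_distrib]
  | mul_X p i hp =>
    have step : ∀ j : Fin 3, bind₁ f (pderiv j (p * X i)) * pderiv k (f j)
        = bind₁ f (pderiv j p) * pderiv k (f j) * f i
          + (if j = i then bind₁ f p * pderiv k (f i) else 0) := by
      intro j
      by_cases h : j = i
      · subst h
        rw [pderiv_mul, pderiv_X_self, mul_one, map_add, _root_.map_mul, bind₁_X_right,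
          if_pos rfl]
        ring
      · rw [pderiv_mul, pderiv_X_of_ne (Ne.symm h), mul_zero, add_zero, _root_.map_mul,
          bind₁_X_right, if_neg h, add_zero]
        ring
    calc pderiv k (bind₁ f (p * X i))
        = pderiv k (bind₁ f p * f i) := by rw [_root_.map_mul, bind₁_X_right]
      _ = pderiv k (bind₁ f p) * f i + bind₁ f p * pderiv k (f i) := pderiv_mul
      _ = (∑ j, bind₁ f (pderiv j p) * pderiv k (f j)) * f i
            + bind₁ f p * pderiv k (f i) := by rw [hp]
      _ = ∑ j, (bind₁ f (pderiv j p) * pderiv k (f j) * f i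
            + if j = i then bind₁ f p * pderiv k (f i) else 0) := by
          rw [Finset.sum_add_distrib, ← Finset.sum_mul,
            Finset.sum_ite_eq' Finset.univ i (fun _ => bind₁ f p * pderiv k (f i)),
            if_pos (Finset.mem_univ i)]
      _ = ∑ j, bind₁ f (pderiv j (p * X i)) * pderiv k (f j) :=
          Finset.sum_congr rfl fun j _ => (step j).symm

lemma eval_bind₁ (v : Fin 3 → K) (f : Fin 3 → MvPolynomial (Fin 3) K)
    (F : MvPolynomial (Fin 3) K) :
    eval v (bind₁ f F) = eval (fun i => eval v (f i)) F := by
  induction F using MvPolynomial.induction_on with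
  | C a => simp
  | add p q hp hq => simp [hp, hq]
  | mul_X p i hp => simp [hp]

lemma eval_matAct (M : Matrix (Fin 3) (Fin 3) K) (F : MvPolynomial (Fin 3) K) (v : Fin 3 → K) :
    eval v (matAct M F) = eval (M.mulVec v) F := by
  rw [matAct, eval_bind₁]
  have h : (fun i => eval v (∑ j, C (M i j) * X j)) = M.mulVec v := by
    funext i
    simp [Matrix.mulVec, dotProduct]
  rw [h]

lemma pderiv_linear (M : Matrix (Fin 3) (Fin 3) K) (i k : Fin 3) :
    pderiv k (∑ j, C (M i j) * X j) = C (M i k) := by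
  have step : ∀ j : Fin 3, pderiv k (C (M i j) * X j) = if j = k then C (M i k) else 0 := by
    intro j
    by_cases h : j = k
    · subst h; simp [pderiv_C_mul]
    · simp [pderiv_C_mul, pderiv_X_of_ne h, if_neg h]
  rw [map_sum, Finset.sum_congr rfl (fun j _ => step j),
    Finset.sum_ite_eq' Finset.univ k (fun _ => C (M i k)), if_pos (Finset.mem_univ k)]

/-- Nonsingularity over `K` itself. -/
def KNonsingular (F : MvPolynomial (Fin 3) K) : Prop :=
  ∀ v : Fin 3 → K, (∀ i, eval v (pderiv i F) = 0) → v = 0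

lemma KNonsingular_matAct {M : Matrix (Fin 3) (Fin 3) K} (hM : IsUnit M)
    {F : MvPolynomial (Fin 3) K} (hF : KNonsingular F) : KNonsingular (matAct M F) := by
  have hdet : IsUnit M.det := (Matrix.isUnit_iff_isUnit_det M).mp hM
  intro v hv
  have key : ∀ k, ∑ i, eval (M.mulVec v) (pderiv i F) * M i k = 0 := by
    intro k
    have h1 := hv k
    rw [matAct, pderiv_bind₁, map_sum] at h1
    rw [← h1]
    refine Finset.sum_congr rfl (fun i _ => ?_)
    rw [_root_.map_mul, ← matAct, eval_matAct, pderiv_linear, eval_C]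
  have h0 : (fun i => eval (M.mulVec v) (pderiv i F)) ᵥ* M = 0 := by
    funext k
    simpa [Matrix.vecMul, dotProduct] using key k
  have hw : (fun i => eval (M.mulVec v) (pderiv i F)) = 0 := by
    have h2 := congrArg (fun u => u ᵥ* (M⁻¹)) h0
    simpa [Matrix.vecMul_vecMul, Matrix.mul_nonsing_inv M hdet] using h2
  have h3 : M.mulVec v = 0 := hF _ (fun i => congrFun hw i)
  have h4 := congrArg (fun u => M⁻¹.mulVec u) h3
  simpa [Matrix.mulVec_mulVec, Matrix.nonsing_inv_mul M hdet] using h4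

lemma matAct_sum {s : Finset (Fin 3 →₀ ℕ)} (M : Matrix (Fin 3) (Fin 3) K)
    (g : (Fin 3 →₀ ℕ) → MvPolynomial (Fin 3) K) :
    matAct M (∑ x ∈ s, g x) = ∑ x ∈ s, matAct M (g x) := by
  unfold matAct; exact map_sum _ _ _

lemma diag_linear (d : Fin 3 → K) (i : Fin 3) :
    ∑ j, C ((diagonal d) i j) * X j = C (d i) * (X i : MvPolynomial (Fin 3) K) := by
  rw [Finset.sum_eq_single i (fun j _ hji => by
    rw [Matrix.diagonal_apply_ne' d hji, map_zero, zero_mul]) (fun h => absurd (Finset.mem_univ i) h)]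
  rw [Matrix.diagonal_apply_eq]

lemma matAct_diagonal_monomial (d : Fin 3 → K) (m : Fin 3 →₀ ℕ) (c : K) :
    matAct (diagonal d) (monomial m c) = monomial m (c * ∏ i, d i ^ m i) := by
  have hf : (fun i => ∑ j, C ((diagonal d) i j) * (X j : MvPolynomial (Fin 3) K))
      = fun i => C (d i) * X i := funext fun i => diag_linear d i
  rw [matAct, hf, bind₁_monomial]
  have h1 : ∀ i ∈ m.support, (C (d i) * (X i : MvPolynomial (Fin 3) K)) ^ m i
      = C (d i ^ m i) * X i ^ m i := fun i _ => by rw [mul_pow, map_pow]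
  have h2 : ∏ i ∈ m.support, d i ^ m i = ∏ i, d i ^ m i :=
    Finset.prod_subset (Finset.subset_univ _) (fun i _ hi => by
      rw [Finsupp.notMem_support_iff.mp hi, pow_zero])
  rw [Finset.prod_congr rfl h1, Finset.prod_mul_distrib, ← map_prod, ← mul_assoc,
    ← _root_.map_mul, h2, monomial_eq]
  rfl

lemma coeff_matAct_diagonal (d : Fin 3 → K) (G : MvPolynomial (Fin 3) K) (m : Fin 3 →₀ ℕ) :
    coeff m (matAct (diagonal d) G) = coeff m G * ∏ i, d i ^ m i := by
  conv_lhs => rw [G.as_sum, matAct_sum]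
  rw [Finset.sum_congr rfl (fun m' _ => matAct_diagonal_monomial d m' _), coeff_sum]
  by_cases hm : m ∈ G.support
  · rw [Finset.sum_eq_single m (fun m' _ hne => by rw [coeff_monomial, if_neg hne])
      (fun h => absurd hm h), coeff_monomial, if_pos rfl]
  · rw [Finset.sum_eq_zero (fun m' hm' => by
      rw [coeff_monomial, if_neg (show m' ≠ m from fun e => hm (e ▸ hm'))]),
      MvPolynomial.notMem_support_iff.mp hm, zero_mul]

lemma matAct_isHomogeneous {M : Matrix (Fin 3) (Fin 3) K} {F : MvPolynomial (Fin 3) K} {n : ℕ}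
    (hF : F.IsHomogeneous n) : (matAct M F).IsHomogeneous n := by
  have hg : ∀ i, MvPolynomial.IsHomogeneous (∑ j, C (M i j) * (X j : MvPolynomial (Fin 3) K)) 1 :=
    fun i => IsHomogeneous.sum _ _ _ (fun j _ => by
      simpa using MvPolynomial.isHomogeneous_C_mul_X_pow (M i j) j 1)
  simpa [matAct] using hF.aeval _ hg

lemma mySignPow {s : K} (hs : s = 1 ∨ s = -1) (n : ℕ) :
    s ^ n = if n % 2 = 0 then 1 else s := by
  have hs2 : s ^ 2 = 1 := by rcases hs with h | h <;> rw [h] <;> ring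
  conv_lhs => rw [← Nat.div_add_mod n 2, pow_add, pow_mul, hs2, one_pow, one_mul]
  rcases Nat.mod_two_eq_zero_or_one n with h | h <;> simp [h]

lemma sign_parity (h2 : (2 : K) ≠ 0) {a b : Fin 3 → K}
    (ha2 : ∀ i, a i = 1 ∨ a i = -1) (hb2 : ∀ i, b i = 1 ∨ b i = -1)
    (hanc : ¬(a 0 = a 1 ∧ a 1 = a 2)) (hbnc : ¬(b 0 = b 1 ∧ b 1 = b 2))
    (habnc : ¬(a 0 * b 0 = a 1 * b 1 ∧ a 1 * b 1 = a 2 * b 2))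
    {m m' : Fin 3 → ℕ}
    (hdeg : (m 0 + m 1 + m 2) % 2 = (m' 0 + m' 1 + m' 2) % 2)
    (hae : a 0 ^ m 0 * a 1 ^ m 1 * a 2 ^ m 2 = a 0 ^ m' 0 * a 1 ^ m' 1 * a 2 ^ m' 2)
    (hbe : b 0 ^ m 0 * b 1 ^ m 1 * b 2 ^ m 2 = b 0 ^ m' 0 * b 1 ^ m' 1 * b 2 ^ m' 2) :
    ∀ i, m i % 2 = m' i % 2 := by
  have hne : (-1 : K) ≠ 1 := by
    intro h; apply h2
    have h3 : (2 : K) = 1 - (-1) := by ring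
    rw [h3, h, sub_self]
  -- distinct signs are opposite
  have opp : ∀ {s t : K}, (s = 1 ∨ s = -1) → (t = 1 ∨ t = -1) → s ≠ t → s = -t := by
    rintro s t (rfl | rfl) (rfl | rfl) h
    · exact absurd rfl h
    · rw [neg_neg]
    · rfl
    · exact absurd rfl h
  -- key: from product relation, parity pattern
  have key : ∀ (c : Fin 3 → K), (∀ i, c i = 1 ∨ c i = -1) →
      (c 0 ^ m 0 * c 1 ^ m 1 * c 2 ^ m 2 = c 0 ^ m' 0 * c 1 ^ m' 1 * c 2 ^ m' 2) →
      (if m 0 % 2 = m' 0 % 2 then (1:K) else c 0) * (if m 1 % 2 = m' 1 % 2 then 1 else c 1)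
        * (if m 2 % 2 = m' 2 % 2 then 1 else c 2) = 1 := by
    intro c hc hce
    have sq : ∀ i, c i ^ 2 = 1 := fun i => by rcases hc i with h | h <;> rw [h] <;> ring
    have expand : ∀ i : Fin 3, c i ^ m i * c i ^ m' i
        = if m i % 2 = m' i % 2 then 1 else c i := by
      intro i
      rw [mySignPow (hc i), mySignPow (hc i)]
      rcases Nat.mod_two_eq_zero_or_one (m i) with h | h <;>
        rcases Nat.mod_two_eq_zero_or_one (m' i) with h' | h' <;>
          rw [h, h'] <;> norm_num
      rw [← sq i]; ring
    have h1 : (c 0 ^ m 0 * c 1 ^ m 1 * c 2 ^ m 2) * (c 0 ^ m' 0 * c 1 ^ m' 1 * c 2 ^ m' 2)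
        = (c 0 ^ m 0 * c 0 ^ m' 0) * (c 1 ^ m 1 * c 1 ^ m' 1) * (c 2 ^ m 2 * c 2 ^ m' 2) := by
      ring
    have h2' : (c 0 ^ m' 0 * c 1 ^ m' 1 * c 2 ^ m' 2) * (c 0 ^ m' 0 * c 1 ^ m' 1 * c 2 ^ m' 2)
        = 1 := by
      have : ∀ i : Fin 3, c i ^ m' i * c i ^ m' i = 1 := fun i => by
        rw [← pow_add, ← two_mul, pow_mul, sq i, one_pow]
      calc (c 0 ^ m' 0 * c 1 ^ m' 1 * c 2 ^ m' 2) * (c 0 ^ m' 0 * c 1 ^ m' 1 * c 2 ^ m' 2)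
          = (c 0 ^ m' 0 * c 0 ^ m' 0) * (c 1 ^ m' 1 * c 1 ^ m' 1)
            * (c 2 ^ m' 2 * c 2 ^ m' 2) := by ring
        _ = 1 := by rw [this 0, this 1, this 2]; ring
    rw [← expand 0, ← expand 1, ← expand 2, ← h1, hce, h2']
  -- now case analysis on the parity pattern
  have pairfix : ∀ {c : Fin 3 → K} {i j : Fin 3}, (∀ i, c i = 1 ∨ c i = -1) →
      c i * c j = 1 → c i = c j := by
    intro c i j hc hij
    rcases hc i with h | h <;> rcases hc j with h' | h' <;> rw [h, h'] at hij ⊢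
    all_goals first
      | exact absurd (show (-1 : K) = 1 by rwa [one_mul] at hij) hne
      | exact absurd (show (-1 : K) = 1 by rwa [mul_one] at hij) hne
  by_cases h0 : m 0 % 2 = m' 0 % 2 <;> by_cases h1 : m 1 % 2 = m' 1 % 2 <;>
    by_cases h2' : m 2 % 2 = m' 2 % 2
  · intro i; fin_cases i <;> assumption
  · omega
  · omega
  · -- m1, m2 parities differ, m0 same
    exfalso
    have ha := key a ha2 hae; rw [if_pos h0, if_neg h1, if_neg h2', one_mul] at ha
    have hb := key b hb2 hbe; rw [if_pos h0, if_neg h1, if_neg h2', one_mul] at hb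
    have ha12 : a 1 = a 2 := pairfix ha2 ha
    have hb12 : b 1 = b 2 := pairfix hb2 hb
    have ha0 : a 0 = -a 1 := opp (ha2 0) (ha2 1) (fun e => hanc ⟨e, ha12⟩)
    have hb0 : b 0 = -b 1 := opp (hb2 0) (hb2 1) (fun e => hbnc ⟨e, hb12⟩)
    exact habnc ⟨by rw [ha0, hb0]; ring, by rw [ha12, hb12]⟩
  · omega
  · -- m0, m2 differ, m1 same
    exfalso
    have ha := key a ha2 hae; rw [if_neg h0, if_pos h1, if_neg h2'] at ha
    have hb := key b hb2 hbe; rw [if_neg h0, if_pos h1, if_neg h2'] at hb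
    have ha02 : a 0 = a 2 := pairfix ha2 (by rw [← ha]; ring)
    have hb02 : b 0 = b 2 := pairfix hb2 (by rw [← hb]; ring)
    have ha1 : a 1 = -a 0 := opp (ha2 1) (ha2 0) (fun e => hanc ⟨e.symm, e.trans ha02⟩)
    have hb1 : b 1 = -b 0 := opp (hb2 1) (hb2 0) (fun e => hbnc ⟨e.symm, e.trans hb02⟩)
    exact habnc ⟨by rw [ha1, hb1]; ring, by rw [ha1, hb1, ha02, hb02]; ring⟩
  · -- m0, m1 differ, m2 same
    exfalso
    have ha := key a ha2 hae; rw [if_neg h0, if_neg h1, if_pos h2', mul_one] at ha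
    have hb := key b hb2 hbe; rw [if_neg h0, if_neg h1, if_pos h2', mul_one] at hb
    have ha01 : a 0 = a 1 := pairfix ha2 ha
    have hb01 : b 0 = b 1 := pairfix hb2 hb
    have ha2'' : a 2 = -a 1 := opp (ha2 2) (ha2 1) (fun e => hanc ⟨ha01, e.symm⟩)
    have hb2'' : b 2 = -b 1 := opp (hb2 2) (hb2 1) (fun e => hbnc ⟨hb01, e.symm⟩)
    exact habnc ⟨by rw [ha01, hb01], by rw [ha2'', hb2'']; ring⟩
  · omega

lemma simul_diag (h2 : (2 : K) ≠ 0) {M N : Matrix (Fin 3) (Fin 3) K}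
    (hM : M * M = 1) (hN : N * N = 1) (hMN : M * N = N * M) :
    ∃ (P : Matrix (Fin 3) (Fin 3) K) (a b : Fin 3 → K), IsUnit P ∧
      (∀ i, a i = 1 ∨ a i = -1) ∧ (∀ i, b i = 1 ∨ b i = -1) ∧
      M * P = P * diagonal a ∧ N * P = P * diagonal b := by
  classical
  have hMM : ∀ v : Fin 3 → K, M.mulVec (M.mulVec v) = v := fun v => by
    rw [Matrix.mulVec_mulVec, hM, Matrix.one_mulVec]
  have hNN : ∀ v : Fin 3 → K, N.mulVec (N.mulVec v) = v := fun v => by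
    rw [Matrix.mulVec_mulVec, hN, Matrix.one_mulVec]
  have hcomm : ∀ v : Fin 3 → K, M.mulVec (N.mulVec v) = N.mulVec (M.mulVec v) := fun v => by
    rw [Matrix.mulVec_mulVec, Matrix.mulVec_mulVec, hMN]
  have eigGen : ∀ (A : Matrix (Fin 3) (Fin 3) K), (∀ v : Fin 3 → K,
      A.mulVec (A.mulVec v) = v) → ∀ (s : K), s * s = 1 → ∀ v : Fin 3 → K,
      A.mulVec (v + s • A.mulVec v) = s • (v + s • A.mulVec v) := by
    intro A hAA s hs v
    rw [Matrix.mulVec_add, Matrix.mulVec_smul, hAA, smul_add, smul_smul, hs, one_smul]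
    exact add_comm _ _
  set S : Set (Fin 3 → K) := {v | ∃ a b : K, (a = 1 ∨ a = -1) ∧ (b = 1 ∨ b = -1) ∧
    M.mulVec v = a • v ∧ N.mulVec v = b • v} with hS
  have hw : ∀ (s t : K), s * s = 1 → t * t = 1 → ∀ v : Fin 3 → K,
      ((v + s • M.mulVec v) + t • N.mulVec (v + s • M.mulVec v)) ∈ S := by
    intro s t hs ht v
    set x := v + s • M.mulVec v with hx
    have hMx : M.mulVec x = s • x := eigGen M hMM s hs v
    have hNw : N.mulVec (x + t • N.mulVec x) = t • (x + t • N.mulVec x) :=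
      eigGen N hNN t ht x
    have hMw : M.mulVec (x + t • N.mulVec x) = s • (x + t • N.mulVec x) := by
      rw [Matrix.mulVec_add, Matrix.mulVec_smul, hcomm, hMx, Matrix.mulVec_smul, smul_add,
        smul_smul, smul_smul, mul_comm t s, hx]
      module
    refine ⟨s, t, ?_, ?_, hMw, hNw⟩
    · rcases mul_self_eq_one_iff.mp hs with h | h
      · exact Or.inl h
      · exact Or.inr h
    · rcases mul_self_eq_one_iff.mp ht with h | h
      · exact Or.inl h
      · exact Or.inr h
  have hspan : Submodule.span K S = ⊤ := by
    rw [Submodule.eq_top_iff']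
    intro v
    have h4 : (4 : K) ≠ 0 := by
      intro h
      apply h2
      have : (4 : K) = 2 * 2 := by norm_num
      rw [this] at h
      rcases mul_eq_zero.mp h with h' | h' <;> exact h'
    have hsum : (4 : K) • v =
        ((v + (1:K) • M.mulVec v) + (1:K) • N.mulVec (v + (1:K) • M.mulVec v))
        + ((v + (1:K) • M.mulVec v) + (-1:K) • N.mulVec (v + (1:K) • M.mulVec v))
        + ((v + (-1:K) • M.mulVec v) + (1:K) • N.mulVec (v + (-1:K) • M.mulVec v))
        + ((v + (-1:K) • M.mulVec v) + (-1:K) • N.mulVec (v + (-1:K) • M.mulVec v)) := by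
      simp only [Matrix.mulVec_add, Matrix.mulVec_smul]
      module
    have hmem : (4 : K) • v ∈ Submodule.span K S := by
      rw [hsum]
      have one2 : (1:K) * 1 = 1 := by norm_num
      have negone2 : (-1:K) * -1 = 1 := by norm_num
      exact Submodule.add_mem _ (Submodule.add_mem _ (Submodule.add_mem _
        (Submodule.subset_span (hw 1 1 one2 one2 v))
        (Submodule.subset_span (hw 1 (-1) one2 negone2 v)))
        (Submodule.subset_span (hw (-1) 1 negone2 one2 v)))
        (Submodule.subset_span (hw (-1) (-1) negone2 negone2 v))
    have : v = (4:K)⁻¹ • ((4:K) • v) := by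
      rw [smul_smul, inv_mul_cancel₀ h4, one_smul]
    rw [this]
    exact Submodule.smul_mem _ _ hmem
  -- extract a basis from S
  obtain ⟨bs, hbsS, hbspan, hbli⟩ := exists_linearIndependent K S
  rw [hspan] at hbspan
  set B : Module.Basis bs K (Fin 3 → K) := Module.Basis.mk hbli (by rw [Subtype.range_coe, hbspan]) with hB
  have : Fintype bs := FiniteDimensional.fintypeBasisIndex B
  have hcard : Fintype.card bs = 3 := by
    have h1 := Module.finrank_eq_card_basis B
    rw [Module.finrank_pi K] at h1
    rw [Fintype.card_fin] at h1
    omega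
  have e : Fin 3 ≃ bs := Fintype.equivOfCardEq (by rw [hcard, Fintype.card_fin])
  set B' : Module.Basis (Fin 3) K (Fin 3 → K) := B.reindex e.symm with hB'
  have hB'mem : ∀ i, (B' i : Fin 3 → K) ∈ S := by
    intro i
    rw [hB', Module.Basis.reindex_apply, Equiv.symm_symm, hB, Module.Basis.coe_mk]
    exact hbsS (e i).2
  choose a b ha hb hMa hNb using hB'mem
  set P : Matrix (Fin 3) (Fin 3) K := (Pi.basisFun K (Fin 3)).toMatrix ⇑B' with hP
  have hPunit : IsUnit P := by
    have := (Pi.basisFun K (Fin 3)).invertibleToMatrix B'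
    exact isUnit_of_invertible P
  have hPapply : ∀ k i, P k i = B' i k := by
    intro k i
    rw [hP, Module.Basis.toMatrix_apply, Pi.basisFun_repr]
  refine ⟨P, a, b, hPunit, ha, hb, ?_, ?_⟩
  · ext k i
    rw [Matrix.mul_apply, Matrix.mul_diagonal, hPapply]
    have : ∑ j, M k j * P j i = M.mulVec (B' i) k := by
      rw [Matrix.mulVec, dotProduct]
      exact Finset.sum_congr rfl fun j _ => by rw [hPapply]
    rw [this, hMa i]
    simp [mul_comm]
  · ext k i
    rw [Matrix.mul_apply, Matrix.mul_diagonal, hPapply]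
    have : ∑ j, N k j * P j i = N.mulVec (B' i) k := by
      rw [Matrix.mulVec, dotProduct]
      exact Finset.sum_congr rfl fun j _ => by rw [hPapply]
    rw [this, hNb i]
    simp [mul_comm]


/-- A canonical representation of exponent vectors on three variables. -/
def tri (x y z : ℕ) : Fin 3 →₀ ℕ :=
  Finsupp.single 0 x + Finsupp.single 1 y + Finsupp.single 2 z

lemma tri_apply0 (x y z : ℕ) : tri x y z 0 = x := by
  simp [tri, Finsupp.single_apply]

lemma tri_apply1 (x y z : ℕ) : tri x y z 1 = y := by
  simp [tri, Finsupp.single_apply]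

lemma tri_apply2 (x y z : ℕ) : tri x y z 2 = z := by
  simp [tri, Finsupp.single_apply]

lemma tri_of (m : Fin 3 →₀ ℕ) : m = tri (m 0) (m 1) (m 2) := by
  ext i
  fin_cases i <;> simp [tri, Finsupp.single_apply]

lemma tri_eq_iff {x y z x' y' z' : ℕ} :
    tri x y z = tri x' y' z' ↔ x = x' ∧ y = y' ∧ z = z' := by
  constructor
  · intro h
    refine ⟨?_, ?_, ?_⟩
    · rw [← tri_apply0 x y z, ← tri_apply0 x' y' z', h]
    · rw [← tri_apply1 x y z, ← tri_apply1 x' y' z', h]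
    · rw [← tri_apply2 x y z, ← tri_apply2 x' y' z', h]
  · rintro ⟨rfl, rfl, rfl⟩; rfl

lemma tri_single0 : tri 4 0 0 = Finsupp.single 0 4 := by
  ext i; fin_cases i <;> simp [tri, Finsupp.single_apply]

lemma tri_single1 : tri 0 4 0 = Finsupp.single 1 4 := by
  ext i; fin_cases i <;> simp [tri, Finsupp.single_apply]

lemma tri_single2 : tri 0 0 4 = Finsupp.single 2 4 := by
  ext i; fin_cases i <;> simp [tri, Finsupp.single_apply]

lemma fsne {m n : Fin 3 →₀ ℕ} (i : Fin 3) (h : m i ≠ n i) : m ≠ n :=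
  fun e => h (by rw [e])

lemma homog_degree {G : MvPolynomial (Fin 3) K} {n : ℕ} (hG : G.IsHomogeneous n)
    {m : Fin 3 →₀ ℕ} (hm : coeff m G ≠ 0) : m 0 + m 1 + m 2 = n := by
  have h := hG hm
  rw [Finsupp.weight_apply, Finsupp.sum] at h
  simp only [Pi.one_apply, smul_eq_mul, mul_one] at h
  have h2 : ∑ i ∈ m.support, m i = ∑ i : Fin 3, m i :=
    Finset.sum_subset (Finset.subset_univ _) (fun i _ hi =>
      Finsupp.notMem_support_iff.mp hi)
  rw [h2, Fin.sum_univ_three] at h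
  exact h

lemma eval_basis_monomial_zero {k j : Fin 3} (hjk : j ≠ k) {m' : Fin 3 →₀ ℕ}
    (hj : 1 ≤ m' j) (c : K) :
    eval (fun x => if x = k then (1:K) else 0) (monomial m' c) = 0 := by
  rw [eval_monomial, Finsupp.prod, Finset.prod_eq_zero
    (Finsupp.mem_support_iff.mpr (show m' j ≠ 0 by omega))
    (by rw [if_neg hjk]; exact zero_pow (show m' j ≠ 0 by omega)), mul_zero]

lemma eval_basis_pderiv_zero {G : MvPolynomial (Fin 3) K} {i j k : Fin 3}
    (hik : i ≠ k) (hjk : j ≠ k) (hij : i ≠ j)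
    (hsupp : ∀ m ∈ G.support, 1 ≤ m i ∧ 1 ≤ m j) :
    ∀ l, eval (fun x => if x = k then (1:K) else 0) (pderiv l G) = 0 := by
  intro l
  conv_lhs => rw [G.as_sum]
  rw [map_sum, map_sum]
  refine Finset.sum_eq_zero (fun m hm => ?_)
  obtain ⟨h1, h2⟩ := hsupp m hm
  rw [pderiv_monomial]
  rcases eq_or_ne l i with rfl | hli
  · have hmj : (m - Finsupp.single l 1 : Fin 3 →₀ ℕ) j = m j := by
      rw [Finsupp.tsub_apply, Finsupp.single_apply, if_neg hij, tsub_zero]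
    exact eval_basis_monomial_zero hjk (by omega) _
  · have hmi : (m - Finsupp.single l 1 : Fin 3 →₀ ℕ) i = m i := by
      rw [Finsupp.tsub_apply, Finsupp.single_apply, if_neg hli, tsub_zero]
    exact eval_basis_monomial_zero hik (by omega) _

lemma basis_vec_ne_zero {k : Fin 3} : (fun x => if x = k then (1:K) else 0) ≠ 0 := by
  intro h
  have := congrFun h k
  rw [if_pos rfl] at this
  exact one_ne_zero this

lemma diag_coeff_ne {G : MvPolynomial (Fin 3) K} (hns : KNonsingular G)
    (hdeg : ∀ m ∈ G.support, m 0 + m 1 + m 2 = 4)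
    (heven : ∀ m ∈ G.support, m 0 % 2 = 0 ∧ m 1 % 2 = 0 ∧ m 2 % 2 = 0)
    (k : Fin 3) : coeff (Finsupp.single k 4) G ≠ 0 := by
  intro hzero
  apply basis_vec_ne_zero (K := K) (k := k)
  apply hns
  intro l
  conv_lhs => rw [G.as_sum]
  rw [map_sum, map_sum]
  refine Finset.sum_eq_zero (fun m hm => ?_)
  rcases eq_or_ne m (Finsupp.single k 4) with rfl | hne
  · rw [hzero, monomial_zero, map_zero, map_zero]
  · obtain ⟨he0, he1, he2⟩ := heven m hm
    have hd := hdeg m hm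
    have hex : ∃ j, j ≠ k ∧ 2 ≤ m j := by
      by_contra hno
      push_neg at hno
      apply hne
      fin_cases k
      · have hv1 := hno 1 (by decide)
        have hv2 := hno 2 (by decide)
        have hh1 : m 1 = 0 := by omega
        have hh2 : m 2 = 0 := by omega
        have hh0 : m 0 = 4 := by omega
        show m = Finsupp.single (0 : Fin 3) 4
        rw [tri_of m, hh0, hh1, hh2]
        exact tri_single0
      · have hv0 := hno 0 (by decide)
        have hv2 := hno 2 (by decide)
        have hh0 : m 0 = 0 := by omega
        have hh2 : m 2 = 0 := by omega
        have hh1 : m 1 = 4 := by omega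
        show m = Finsupp.single (1 : Fin 3) 4
        rw [tri_of m, hh0, hh1, hh2]
        exact tri_single1
      · have hv0 := hno 0 (by decide)
        have hv1 := hno 1 (by decide)
        have hh0 : m 0 = 0 := by omega
        have hh1 : m 1 = 0 := by omega
        have hh2 : m 2 = 4 := by omega
        show m = Finsupp.single (2 : Fin 3) 4
        rw [tri_of m, hh0, hh1, hh2]
        exact tri_single2
    obtain ⟨j, hjk, hj2⟩ := hex
    rw [pderiv_monomial]
    refine eval_basis_monomial_zero hjk ?_ _
    rw [Finsupp.tsub_apply, Finsupp.single_apply]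
    split <;> omega

lemma tri220 : tri 2 2 0 = Finsupp.single (0 : Fin 3) 2 + Finsupp.single 1 2 := by
  ext i; fin_cases i <;> simp [tri, Finsupp.single_apply]

lemma tri022 : tri 0 2 2 = Finsupp.single (1 : Fin 3) 2 + Finsupp.single 2 2 := by
  ext i; fin_cases i <;> simp [tri, Finsupp.single_apply]

lemma tri202 : tri 2 0 2 = Finsupp.single (2 : Fin 3) 2 + Finsupp.single 0 2 := by
  ext i; fin_cases i <;> simp [tri, Finsupp.single_apply]

lemma c_mul_sq_sq (c : K) (i j : Fin 3) :
    C c * X i ^ 2 * X j ^ 2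
      = monomial (Finsupp.single i 2 + Finsupp.single j 2) c := by
  rw [X_pow_eq_monomial, X_pow_eq_monomial, C_mul_monomial, monomial_mul, mul_one, mul_one]

lemma ciani_reduction [IsAlgClosed K] (h2 : (2 : K) ≠ 0)
    {G : MvPolynomial (Fin 3) K} (hG4 : G.IsHomogeneous 4) (hns : KNonsingular G)
    {a b : Fin 3 → K} (ha2 : ∀ i, a i = 1 ∨ a i = -1) (hb2 : ∀ i, b i = 1 ∨ b i = -1)
    (hanc : ¬(a 0 = a 1 ∧ a 1 = a 2)) (hbnc : ¬(b 0 = b 1 ∧ b 1 = b 2))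
    (habnc : ¬(a 0 * b 0 = a 1 * b 1 ∧ a 1 * b 1 = a 2 * b 2))
    {ca cb : K} (hae : matAct (diagonal a) G = ca • G)
    (hbe : matAct (diagonal b) G = cb • G) :
    ∃ (d : Fin 3 → K) (r s t : K), IsUnit (diagonal d) ∧
      matAct (diagonal d) G = X 0 ^ 4 + X 1 ^ 4 + X 2 ^ 4 + C r * X 0 ^ 2 * X 1 ^ 2
        + C s * X 1 ^ 2 * X 2 ^ 2 + C t * X 2 ^ 2 * X 0 ^ 2 := by
  have hprodA : ∀ m ∈ G.support, ∏ i, a i ^ (m i) = ca := by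
    intro m hm
    have h := congrArg (coeff m) hae
    rw [coeff_matAct_diagonal, coeff_smul, smul_eq_mul] at h
    exact mul_left_cancel₀ (mem_support_iff.mp hm) (h.trans (mul_comm ca (coeff m G)))
  have hprodB : ∀ m ∈ G.support, ∏ i, b i ^ (m i) = cb := by
    intro m hm
    have h := congrArg (coeff m) hbe
    rw [coeff_matAct_diagonal, coeff_smul, smul_eq_mul] at h
    exact mul_left_cancel₀ (mem_support_iff.mp hm) (h.trans (mul_comm cb (coeff m G)))
  have hdeg : ∀ m ∈ G.support, m 0 + m 1 + m 2 = 4 := fun m hm =>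
    homog_degree hG4 (mem_support_iff.mp hm)
  have hpar : ∀ m ∈ G.support, ∀ m' ∈ G.support, ∀ i : Fin 3, m i % 2 = m' i % 2 := by
    intro m hm m' hm'
    refine sign_parity h2 ha2 hb2 hanc hbnc habnc
      (by rw [hdeg m hm, hdeg m' hm']) ?_ ?_
    · rw [← Fin.prod_univ_three (fun i => a i ^ (m i)),
        ← Fin.prod_univ_three (fun i => a i ^ (m' i)), hprodA m hm, hprodA m' hm']
    · rw [← Fin.prod_univ_three (fun i => b i ^ (m i)),
        ← Fin.prod_univ_three (fun i => b i ^ (m' i)), hprodB m hm, hprodB m' hm']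
  -- G is nonzero, pick a monomial in the support
  have hGne : G ≠ 0 := by
    intro h
    apply basis_vec_ne_zero (K := K) (k := 0)
    exact hns _ (fun i => by rw [h, map_zero, map_zero])
  obtain ⟨m₀, hm₀⟩ := Finset.nonempty_iff_ne_empty.mpr
    (fun h => hGne (support_eq_empty.mp h))
  -- rule out the mixed-parity cases using nonsingularity
  have badcase : ∀ (i j k : Fin 3), i ≠ k → j ≠ k → i ≠ j →
      m₀ i % 2 = 1 → m₀ j % 2 = 1 → False := by
    intro i j k hik hjk hij hoi hoj
    apply basis_vec_ne_zero (K := K) (k := k)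
    apply hns
    refine eval_basis_pderiv_zero hik hjk hij (fun m hm => ?_)
    have h1 := hpar m hm m₀ hm₀ i
    have h2 := hpar m hm m₀ hm₀ j
    omega
  have h40 := hdeg m₀ hm₀
  rcases Nat.mod_two_eq_zero_or_one (m₀ 0) with h0 | h0 <;>
    rcases Nat.mod_two_eq_zero_or_one (m₀ 1) with h1 | h1 <;>
      rcases Nat.mod_two_eq_zero_or_one (m₀ 2) with h2' | h2'
  case inr.inr.inr => omega
  case inl.inl.inr => omega
  case inl.inr.inl => omega
  case inr.inl.inl => omega
  case inl.inr.inr => exact absurd (badcase 1 2 0 (by decide) (by decide) (by decide) h1 h2') id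
  case inr.inl.inr => exact absurd (badcase 0 2 1 (by decide) (by decide) (by decide) h0 h2') id
  case inr.inr.inl => exact absurd (badcase 0 1 2 (by decide) (by decide) (by decide) h0 h1) id
  -- the good case: all exponents even
  case inl.inl.inl =>
  have heven : ∀ m ∈ G.support, m 0 % 2 = 0 ∧ m 1 % 2 = 0 ∧ m 2 % 2 = 0 := by
    intro m hm
    have h := hpar m hm m₀ hm₀
    exact ⟨by rw [h 0]; exact h0, by rw [h 1]; exact h1, by rw [h 2]; exact h2'⟩
  have hA : ∀ k : Fin 3, coeff (Finsupp.single k 4) G ≠ 0 := diag_coeff_ne hns hdeg heven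
  have hall : ∀ k : Fin 3, ∃ e : K, e ^ 4 = (coeff (Finsupp.single k 4) G)⁻¹ :=
    fun k => IsAlgClosed.exists_pow_nat_eq _ (by norm_num)
  choose d hd using hall
  have hdne : ∀ k, d k ≠ 0 := by
    intro k h
    apply inv_ne_zero (hA k)
    rw [← hd k, h, zero_pow]
    norm_num
  have hdunit : IsUnit (diagonal d) := by
    rw [Matrix.isUnit_iff_isUnit_det, det_diagonal, isUnit_iff_ne_zero, Fin.prod_univ_three]
    exact mul_ne_zero (mul_ne_zero (hdne 0) (hdne 1)) (hdne 2)
  set r : K := coeff (tri 2 2 0) G * (d 0 ^ 2 * d 1 ^ 2) with hr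
  set s : K := coeff (tri 0 2 2) G * (d 1 ^ 2 * d 2 ^ 2) with hs
  set t : K := coeff (tri 2 0 2) G * (d 2 ^ 2 * d 0 ^ 2) with ht
  refine ⟨d, r, s, t, hdunit, ?_⟩
  have htarget : (X 0 ^ 4 + X 1 ^ 4 + X 2 ^ 4 + C r * X 0 ^ 2 * X 1 ^ 2
      + C s * X 1 ^ 2 * X 2 ^ 2 + C t * X 2 ^ 2 * X 0 ^ 2 : MvPolynomial (Fin 3) K)
      = monomial (tri 4 0 0) 1 + monomial (tri 0 4 0) 1 + monomial (tri 0 0 4) 1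
        + monomial (tri 2 2 0) r + monomial (tri 0 2 2) s + monomial (tri 2 0 2) t := by
    rw [X_pow_eq_monomial, X_pow_eq_monomial, X_pow_eq_monomial, c_mul_sq_sq, c_mul_sq_sq,
      c_mul_sq_sq, ← tri_single0, ← tri_single1, ← tri_single2, ← tri220, ← tri022, ← tri202]
  rw [htarget]
  apply MvPolynomial.ext
  intro m
  rw [coeff_matAct_diagonal]
  simp only [coeff_add, coeff_monomial]
  by_cases hmem : m ∈ G.support
  · obtain ⟨p0, p1, p2⟩ := heven m hmem
    have hd4 := hdeg m hmem
    have hcases : (m 0 = 4 ∧ m 1 = 0 ∧ m 2 = 0) ∨ (m 0 = 0 ∧ m 1 = 4 ∧ m 2 = 0)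
        ∨ (m 0 = 0 ∧ m 1 = 0 ∧ m 2 = 4) ∨ (m 0 = 2 ∧ m 1 = 2 ∧ m 2 = 0)
        ∨ (m 0 = 0 ∧ m 1 = 2 ∧ m 2 = 2) ∨ (m 0 = 2 ∧ m 1 = 0 ∧ m 2 = 2) := by omega
    have hmtri := tri_of m
    rcases hcases with ⟨q0,q1,q2⟩ | ⟨q0,q1,q2⟩ | ⟨q0,q1,q2⟩ | ⟨q0,q1,q2⟩ | ⟨q0,q1,q2⟩
      | ⟨q0,q1,q2⟩ <;> rw [q0, q1, q2] at hmtri <;> rw [hmtri] <;> simp only [tri_eq_iff] <;>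
      rw [Fin.prod_univ_three, tri_apply0, tri_apply1, tri_apply2] <;> norm_num
    all_goals first
      | rw [tri_single0, hd 0, mul_inv_cancel₀ (hA 0)]
      | rw [tri_single1, hd 1, mul_inv_cancel₀ (hA 1)]
      | rw [tri_single2, hd 2, mul_inv_cancel₀ (hA 2)]
      | (rw [hr]; ring)
      | (rw [hs]; ring)
      | (rw [ht]; ring)
      | ring
  · have hc : coeff m G = 0 := notMem_support_iff.mp hmem
    rw [hc, zero_mul]
    have t1 : (if tri 4 0 0 = m then (1:K) else 0) = 0 := by
      rw [if_neg]
      intro e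
      exact hA 0 (by rw [← tri_single0, e]; exact hc)
    have t2 : (if tri 0 4 0 = m then (1:K) else 0) = 0 := by
      rw [if_neg]
      intro e
      exact hA 1 (by rw [← tri_single1, e]; exact hc)
    have t3 : (if tri 0 0 4 = m then (1:K) else 0) = 0 := by
      rw [if_neg]
      intro e
      exact hA 2 (by rw [← tri_single2, e]; exact hc)
    have t4 : (if tri 2 2 0 = m then r else 0) = 0 := by
      split_ifs with h
      · rw [hr, h, hc, zero_mul]
      · rfl
    have t5 : (if tri 0 2 2 = m then s else 0) = 0 := by
      split_ifs with h
      · rw [hs, h, hc, zero_mul]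
      · rfl
    have t6 : (if tri 2 0 2 = m then t else 0) = 0 := by
      split_ifs with h
      · rw [ht, h, hc, zero_mul]
      · rfl
    rw [t1, t2, t3, t4, t5, t6]
    norm_num

lemma matAct_scalar {G : MvPolynomial (Fin 3) K} {n : ℕ} (hG : G.IsHomogeneous n) (c : K) :
    matAct (c • (1 : Matrix (Fin 3) (Fin 3) K)) G = c ^ n • G := by
  rw [Matrix.smul_one_eq_diagonal]
  apply MvPolynomial.ext
  intro m
  rw [coeff_matAct_diagonal, coeff_smul, smul_eq_mul]
  by_cases hm : coeff m G = 0
  · rw [hm, mul_zero, zero_mul]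
  · rw [mul_comm (c ^ n) (coeff m G)]
    congr 1
    have hn := homog_degree hG hm
    rw [Finset.prod_pow_eq_pow_sum, Fin.sum_univ_three, hn]

lemma eval_map_comp {L : Type} [CommSemiring L] (φ : K →+* L) (v : Fin 3 → K)
    (p : MvPolynomial (Fin 3) K) :
    eval (fun i => φ (v i)) (map φ p) = φ (eval v p) := by
  induction p using MvPolynomial.induction_on with
  | C a => simp
  | add p q hp hq => simp [hp, hq]
  | mul_X p i hp => simp [hp]

lemma KNonsingular_of_QNonsingular {F : MvPolynomial (Fin 3) K} (h : QNonsingular F) :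
    KNonsingular F := by
  intro v hv
  have h0 := h (fun i => algebraMap K (AlgebraicClosure K) (v i)) (fun i => by
    rw [pderiv_map, eval_map_comp, hv i, map_zero])
  funext i
  have := congrFun h0 i
  exact (algebraMap K (AlgebraicClosure K)).injective
    (this.trans (map_zero (algebraMap K (AlgebraicClosure K))).symm)

theorem statement10 {K : Type} [Field K] [IsAlgClosed K]
    (hchar : ringChar K = 0 ∨ 5 ≤ ringChar K)
    (F : MvPolynomial (Fin 3) K) (hF0 : F ≠ 0) (hF4 : F.IsHomogeneous 4)
    (hns : QNonsingular F)
    (haut : Nonempty (projAut F ≃* Multiplicative (ZMod 2) × Multiplicative (ZMod 2))) :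
    ∃ r s t : K, kEquiv F (X 0 ^ 4 + X 1 ^ 4 + X 2 ^ 4 + C r * X 0 ^ 2 * X 1 ^ 2
      + C s * X 1 ^ 2 * X 2 ^ 2 + C t * X 2 ^ 2 * X 0 ^ 2) := by
  classical
  have hchar2 : (2 : K) ≠ 0 := by
    intro h
    have hdvd : ringChar K ∣ 2 := (CharP.cast_eq_zero_iff K (ringChar K) 2).mp h
    rcases hchar with h0 | h5
    · rw [h0] at hdvd
      exact absurd (zero_dvd_iff.mp hdvd) (by norm_num)
    · have := Nat.le_of_dvd (by norm_num) hdvd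
      omega
  obtain ⟨φ⟩ := haut
  set x : Multiplicative (ZMod 2) × Multiplicative (ZMod 2) :=
    (Multiplicative.ofAdd 1, 1) with hxdef
  set y : Multiplicative (ZMod 2) × Multiplicative (ZMod 2) :=
    (1, Multiplicative.ofAdd 1) with hydef
  obtain ⟨A, hAmk⟩ : ∃ A : autGroup F,
      (QuotientGroup.mk A : autGroup F ⧸ scalarGroup F) = φ.symm x :=
    ⟨_, QuotientGroup.out_eq' _⟩
  obtain ⟨B, hBmk⟩ : ∃ B : autGroup F,
      (QuotientGroup.mk B : autGroup F ⧸ scalarGroup F) = φ.symm y :=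
    ⟨_, QuotientGroup.out_eq' _⟩
  have hsymm_mul : ∀ u v : Multiplicative (ZMod 2) × Multiplicative (ZMod 2),
      (φ.symm u * φ.symm v : autGroup F ⧸ scalarGroup F) = φ.symm (u * v) :=
    fun u v => (_root_.map_mul φ.symm u v).symm
  have hsymm_one : (φ.symm 1 : autGroup F ⧸ scalarGroup F) = 1 := _root_.map_one φ.symm
  have hAsq : A * A ∈ scalarGroup F := by
    apply (QuotientGroup.eq_one_iff (A * A)).mp
    rw [QuotientGroup.mk_mul, hAmk]
    exact (hsymm_mul x x).trans (by rw [show x * x = 1 by rw [hxdef]; decide]; exact hsymm_one)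
  have hBsq : B * B ∈ scalarGroup F := by
    apply (QuotientGroup.eq_one_iff (B * B)).mp
    rw [QuotientGroup.mk_mul, hBmk]
    exact (hsymm_mul y y).trans (by rw [show y * y = 1 by rw [hydef]; decide]; exact hsymm_one)
  have hAns : A ∉ scalarGroup F := by
    intro h
    have h1 := (QuotientGroup.eq_one_iff A).mpr h
    rw [hAmk] at h1
    exact absurd (φ.symm.injective (h1.trans hsymm_one.symm)) (by rw [hxdef]; decide)
  have hBns : B ∉ scalarGroup F := by
    intro h
    have h1 := (QuotientGroup.eq_one_iff B).mpr h
    rw [hBmk] at h1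
    exact absurd (φ.symm.injective (h1.trans hsymm_one.symm)) (by rw [hydef]; decide)
  have hABns : A * B ∉ scalarGroup F := by
    intro h
    have h1 := (QuotientGroup.eq_one_iff (A * B)).mpr h
    rw [QuotientGroup.mk_mul, hAmk, hBmk] at h1
    exact absurd (φ.symm.injective ((hsymm_mul x y).symm.trans (h1.trans hsymm_one.symm))) (by rw [hxdef, hydef]; decide)
  have hABmem : (A * B)⁻¹ * (B * A) ∈ scalarGroup F := by
    apply QuotientGroup.eq.mp
    rw [QuotientGroup.mk_mul, QuotientGroup.mk_mul, hAmk, hBmk]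
    exact (hsymm_mul x y).trans ((congrArg φ.symm (mul_comm x y)).trans (hsymm_mul y x).symm)
  -- move to matrices
  set MatA : Matrix (Fin 3) (Fin 3) K := ((A : GL (Fin 3) K) : Matrix (Fin 3) (Fin 3) K)
    with hMatA
  set MatB : Matrix (Fin 3) (Fin 3) K := ((B : GL (Fin 3) K) : Matrix (Fin 3) (Fin 3) K)
    with hMatB
  obtain ⟨cA, hcA⟩ := hAsq
  rw [MulMemClass.coe_mul, Units.val_mul] at hcA
  obtain ⟨cB, hcB⟩ := hBsq
  rw [MulMemClass.coe_mul, Units.val_mul] at hcB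
  obtain ⟨uA, huA⟩ := A.2
  obtain ⟨uB, huB⟩ := B.2
  set C0 : ↥(autGroup F) := (A * B)⁻¹ * (B * A) with hC0def
  obtain ⟨cC, hcC⟩ := hABmem
  obtain ⟨dA, hdA⟩ := IsAlgClosed.exists_pow_nat_eq ((cA : K)) (n := 2) (by norm_num)
  obtain ⟨dB, hdB⟩ := IsAlgClosed.exists_pow_nat_eq ((cB : K)) (n := 2) (by norm_num)
  have hdAne : dA ≠ 0 := fun h => cA.ne_zero (by rw [← hdA, h]; norm_num)
  have hdBne : dB ≠ 0 := fun h => cB.ne_zero (by rw [← hdB, h]; norm_num)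
  set M : Matrix (Fin 3) (Fin 3) K := dA⁻¹ • MatA with hMdef
  set N : Matrix (Fin 3) (Fin 3) K := dB⁻¹ • MatB with hNdef
  have hMM : M * M = 1 := by
    rw [hMdef, Matrix.smul_mul, Matrix.mul_smul, hcA, smul_smul, smul_smul]
    have he : dA⁻¹ * dA⁻¹ * (cA : K) = 1 := by
      rw [← hdA]; field_simp; try ring
    rw [he, one_smul]
  have hNN : N * N = 1 := by
    rw [hNdef, Matrix.smul_mul, Matrix.mul_smul, hcB, smul_smul, smul_smul]
    have he : dB⁻¹ * dB⁻¹ * (cB : K) = 1 := by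
      rw [← hdB]; field_simp; try ring
    rw [he, one_smul]
  have hMact : matAct M F = ((dA⁻¹) ^ 4 * (uA : K)) • F := by
    have hsp : M = (dA⁻¹ • (1 : Matrix (Fin 3) (Fin 3) K)) * MatA := by
      rw [Matrix.smul_mul, one_mul]
    rw [hsp, matAct_mul, matAct_scalar hF4, matAct_smul, huA, smul_smul]
  have hNact : matAct N F = ((dB⁻¹) ^ 4 * (uB : K)) • F := by
    have hsp : N = (dB⁻¹ • (1 : Matrix (Fin 3) (Fin 3) K)) * MatB := by
      rw [Matrix.smul_mul, one_mul]
    rw [hsp, matAct_mul, matAct_scalar hF4, matAct_smul, huB, smul_smul]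
  -- commutator is a scalar, which must be 1
  have hBA : MatB * MatA = (cC : K) • (MatA * MatB) := by
    have e1 : ((B * A : autGroup F) : GL (Fin 3) K)
        = ((A * B : autGroup F) : GL (Fin 3) K) * ((C0 : autGroup F) : GL (Fin 3) K) := by
      rw [hC0def, ← MulMemClass.coe_mul]
      congr 1
      group
    have e2 := congrArg (fun u : GL (Fin 3) K => (u : Matrix (Fin 3) (Fin 3) K)) e1
    simp only [MulMemClass.coe_mul, Units.val_mul] at e2
    rw [hcC] at e2
    rw [hMatA, hMatB, e2, Matrix.mul_smul, mul_one]
  have hNM : N * M = (cC : K) • (M * N) := by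
    rw [hMdef, hNdef, Matrix.smul_mul, Matrix.mul_smul, Matrix.smul_mul, Matrix.mul_smul,
      hBA, smul_smul, smul_smul, smul_smul, smul_smul]
    congr 1
    ring
  have hMunit : IsUnit M := (Matrix.isUnit_iff_isUnit_det M).mpr
    (IsUnit.of_mul_eq_one _ (by rw [← det_mul, hMM, det_one]))
  have hNunit : IsUnit N := (Matrix.isUnit_iff_isUnit_det N).mpr
    (IsUnit.of_mul_eq_one _ (by rw [← det_mul, hNN, det_one]))
  have hdetMN : det (M * N) ≠ 0 :=
    ((Matrix.isUnit_iff_isUnit_det _).mp (hMunit.mul hNunit)).ne_zero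
  have hc3 : (cC : K) ^ 3 = 1 := by
    have h1 : det (N * M) = det (M * N) := by rw [det_mul, det_mul, mul_comm]
    have h2 : det (N * M) = (cC : K) ^ 3 * det (M * N) := by
      rw [hNM, det_smul]
      norm_num
    rw [h2] at h1
    have := mul_right_cancel₀ hdetMN (h1.trans (one_mul (det (M * N))).symm)
    exact this
  have hc2 : (cC : K) ^ 2 = 1 := by
    have e : N = (cC : K) ^ 2 • N := by
      calc N = (N * M) * M := by rw [mul_assoc, hMM, mul_one]
        _ = ((cC : K) • (M * N)) * M := by rw [hNM]
        _ = (cC : K) • (M * (N * M)) := by rw [Matrix.smul_mul, mul_assoc]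
        _ = (cC : K) • (M * ((cC : K) • (M * N))) := by rw [hNM]
        _ = (cC : K) ^ 2 • ((M * M) * N) := by
            rw [Matrix.mul_smul, smul_smul, ← mul_assoc, pow_two]
        _ = (cC : K) ^ 2 • N := by rw [hMM, one_mul]
    by_contra hne
    have hsub : ((1 : K) - (cC : K) ^ 2) • N = 0 := by
      rw [sub_smul, one_smul, ← e, sub_self]
    have hN0 : N = 0 := by
      rcases smul_eq_zero.mp hsub with h | h
      · exact absurd (by linear_combination -h : (cC : K) ^ 2 = 1) hne
      · exact h
    rw [hN0, mul_zero] at hNN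
    have := congrFun (congrFun hNN 0) 0
    simp [Matrix.one_apply] at this
  have hC1 : (cC : K) = 1 := by linear_combination hc3 - (cC : K) * hc2
  have hMN : M * N = N * M := by rw [hNM, hC1, one_smul]
  -- nonscalarity
  have hMns : ∀ c : K, M ≠ c • 1 := by
    intro c hMc
    have hcne : c ≠ 0 := by
      intro h
      rw [h, zero_smul] at hMc
      rw [hMc, mul_zero] at hMM
      have := congrFun (congrFun hMM 0) 0
      simp [Matrix.one_apply] at this
    apply hAns
    refine ⟨Units.mk0 (dA * c) (mul_ne_zero hdAne hcne), ?_⟩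
    show MatA = (dA * c) • (1 : Matrix (Fin 3) (Fin 3) K)
    have hMA : MatA = dA • M := by
      rw [hMdef, smul_smul, mul_inv_cancel₀ hdAne, one_smul]
    rw [hMA, hMc, smul_smul]
  have hNns : ∀ c : K, N ≠ c • 1 := by
    intro c hNc
    have hcne : c ≠ 0 := by
      intro h
      rw [h, zero_smul] at hNc
      rw [hNc, mul_zero] at hNN
      have := congrFun (congrFun hNN 0) 0
      simp [Matrix.one_apply] at this
    apply hBns
    refine ⟨Units.mk0 (dB * c) (mul_ne_zero hdBne hcne), ?_⟩
    show MatB = (dB * c) • (1 : Matrix (Fin 3) (Fin 3) K)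
    have hNB : MatB = dB • N := by
      rw [hNdef, smul_smul, mul_inv_cancel₀ hdBne, one_smul]
    rw [hNB, hNc, smul_smul]
  have hMNns : ∀ c : K, M * N ≠ c • 1 := by
    intro c hMNc
    have hcne : c ≠ 0 := by
      intro h
      rw [h, zero_smul] at hMNc
      have : det (M * N) = 0 := by rw [hMNc, det_zero]
      exact hdetMN this
    apply hABns
    refine ⟨Units.mk0 (dA * dB * c) (mul_ne_zero (mul_ne_zero hdAne hdBne) hcne), ?_⟩
    show ((A * B : autGroup F) : GL (Fin 3) K).val
      = (dA * dB * c) • (1 : Matrix (Fin 3) (Fin 3) K)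
    have hAB : ((A * B : autGroup F) : GL (Fin 3) K).val = MatA * MatB := by
      rw [MulMemClass.coe_mul, Units.val_mul]
    have hABM : MatA * MatB = (dA * dB) • (M * N) := by
      rw [hMdef, hNdef, Matrix.smul_mul, Matrix.mul_smul, smul_smul, smul_smul]
      congr 1
      field_simp
      rw [one_smul]
    rw [hAB, hABM, hMNc, smul_smul]
  -- simultaneous diagonalization
  obtain ⟨P, a, b, hPunit, ha2, hb2, hMP, hNP⟩ := simul_diag hchar2 hMM hNN hMN
  have hPdet : IsUnit P.det := (Matrix.isUnit_iff_isUnit_det P).mp hPunit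
  set G : MvPolynomial (Fin 3) K := matAct P F with hGdef
  have hGhom : G.IsHomogeneous 4 := matAct_isHomogeneous hF4
  have hGns : KNonsingular G := KNonsingular_matAct hPunit (KNonsingular_of_QNonsingular hns)
  have haG : matAct (diagonal a) G = ((dA⁻¹) ^ 4 * (uA : K)) • G := by
    rw [hGdef, ← matAct_mul, ← hMP, matAct_mul, hMact, matAct_smul]
  have hbG : matAct (diagonal b) G = ((dB⁻¹) ^ 4 * (uB : K)) • G := by
    rw [hGdef, ← matAct_mul, ← hNP, matAct_mul, hNact, matAct_smul]
  have diagconst : ∀ (v : Fin 3 → K), v 0 = v 1 → v 1 = v 2 →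
      diagonal v = v 0 • (1 : Matrix (Fin 3) (Fin 3) K) := by
    intro v e1 e2
    have hv : v = fun _ => v 0 := by
      funext i
      fin_cases i
      · rfl
      · exact e1.symm
      · exact (e1.trans e2).symm
    rw [Matrix.smul_one_eq_diagonal]
    conv_lhs => rw [hv]
  have hanc : ¬(a 0 = a 1 ∧ a 1 = a 2) := by
    rintro ⟨e1, e2⟩
    apply hMns (a 0)
    have hDP : M * P = a 0 • P := by
      rw [hMP, diagconst a e1 e2, Matrix.mul_smul, mul_one]
    calc M = M * P * P⁻¹ := by rw [mul_assoc, Matrix.mul_nonsing_inv P hPdet, mul_one]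
      _ = (a 0 • P) * P⁻¹ := by rw [hDP]
      _ = a 0 • 1 := by rw [Matrix.smul_mul, Matrix.mul_nonsing_inv P hPdet]
  have hbnc : ¬(b 0 = b 1 ∧ b 1 = b 2) := by
    rintro ⟨e1, e2⟩
    apply hNns (b 0)
    have hDP : N * P = b 0 • P := by
      rw [hNP, diagconst b e1 e2, Matrix.mul_smul, mul_one]
    calc N = N * P * P⁻¹ := by rw [mul_assoc, Matrix.mul_nonsing_inv P hPdet, mul_one]
      _ = (b 0 • P) * P⁻¹ := by rw [hDP]
      _ = b 0 • 1 := by rw [Matrix.smul_mul, Matrix.mul_nonsing_inv P hPdet]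
  have habnc : ¬(a 0 * b 0 = a 1 * b 1 ∧ a 1 * b 1 = a 2 * b 2) := by
    rintro ⟨e1, e2⟩
    apply hMNns (a 0 * b 0)
    have hMNP : (M * N) * P = P * diagonal (fun i => a i * b i) := by
      rw [mul_assoc, hNP, ← mul_assoc, hMP, mul_assoc, Matrix.diagonal_mul_diagonal]
    have hDP : (M * N) * P = (a 0 * b 0) • P := by
      rw [hMNP, diagconst (fun i => a i * b i) e1 e2, Matrix.mul_smul, mul_one]
    calc M * N = (M * N) * P * P⁻¹ := by
          rw [mul_assoc, Matrix.mul_nonsing_inv P hPdet, mul_one]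
      _ = ((a 0 * b 0) • P) * P⁻¹ := by rw [hDP]
      _ = (a 0 * b 0) • 1 := by rw [Matrix.smul_mul, Matrix.mul_nonsing_inv P hPdet]
  obtain ⟨d, r, s, t, hdunit, hfinal⟩ :=
    ciani_reduction hchar2 hGhom hGns ha2 hb2 hanc hbnc habnc haG hbG
  refine ⟨r, s, t, ((hPunit.mul hdunit).unit : GL (Fin 3) K), 1, ?_⟩
  rw [Units.val_one, one_smul]
  have hval : (((hPunit.mul hdunit).unit : GL (Fin 3) K) : Matrix (Fin 3) (Fin 3) K)
      = P * diagonal d := IsUnit.unit_spec _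
  rw [hval, matAct_mul, ← hGdef, hfinal]


end
end

section
/- Let q be a prime power, let K be an algebraic closure of 𝔽_q, and let φ denote the map on n×n matrices over K that applies the q-power Frobenius x ↦ x^q to each entry. Let m ≥ 1 and let A be an n×n matrix over K satisfying the cocycle condition φ^{m−1}(A) · φ^{m−2}(A) ⋯ φ(A) · A = Id. Let P be any n×n matrix over K all of whose entries lie in the subfield 𝔽_{q^m} (equivalently, φ^m(P) = P), and set B = P + Σ_{i=1}^{m−1} φ^i(P) · φ^{i−1}(A) ⋯ φ(A) · A. Then φ(B) · A = B. -/
theorem statement15 (p k : ℕ) [Fact p.Prime] (hk : k ≠ 0)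
    (K : Type) [Field K] [Algebra (GaloisField p k) K] [IsAlgClosure (GaloisField p k) K]
    [ExpChar K p]
    (n m : ℕ) (hm : 1 ≤ m) (A P : Matrix (Fin n) (Fin n) K)
    (φ : Matrix (Fin n) (Fin n) K →+* Matrix (Fin n) (Fin n) K)
    (hφ : φ = (iterateFrobenius K p k).mapMatrix)
    (hA : ((List.range m).reverse.map fun i => (⇑φ)^[i] A).prod = 1)
    (hP : (⇑φ)^[m] P = P)
    (B : Matrix (Fin n) (Fin n) K)
    (hB : B = P + ∑ i ∈ Finset.Icc 1 (m - 1),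
        (⇑φ)^[i] P * ((List.range i).reverse.map fun j => (⇑φ)^[j] A).prod) :
    φ B * A = B := by
  set L : ℕ → Matrix (Fin n) (Fin n) K :=
    fun i => ((List.range i).reverse.map fun j => (⇑φ)^[j] A).prod with hL
  have key : ∀ i, L (i + 1) = φ (L i) * A := by
    intro i
    simp only [hL, List.range_succ_eq_map, List.reverse_cons, List.map_append,
      List.prod_append, List.map_map, map_list_prod]
    simp [Function.comp_def, Function.iterate_succ_apply']
  -- rewrite B as a sum over range m
  have hB2 : B = ∑ i ∈ Finset.range m, (⇑φ)^[i] P * L i := by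
    rw [hB, Finset.range_eq_Ico, Finset.sum_eq_sum_Ico_succ_bot hm]
    have : Finset.Icc 1 (m - 1) = Finset.Ico 1 m := by
      rw [← Finset.Ico_add_one_right_eq_Icc]; congr 1; omega
    simp [this, hL]
  conv_lhs => rw [hB2, map_sum, Finset.sum_mul]
  have step : ∀ i, φ ((⇑φ)^[i] P * L i) * A = (⇑φ)^[i + 1] P * L (i + 1) := by
    intro i
    rw [map_mul, key, Function.iterate_succ_apply', mul_assoc]
  calc (∑ i ∈ Finset.range m, φ ((⇑φ)^[i] P * L i) * A)
      = ∑ i ∈ Finset.range m, (⇑φ)^[i + 1] P * L (i + 1) := by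
        exact Finset.sum_congr rfl fun i _ => step i
    _ = ∑ i ∈ Finset.Ico 1 (m + 1), (⇑φ)^[i] P * L i := by
        rw [Finset.sum_Ico_eq_sum_range]
        simp [add_comm 1]
    _ = (∑ i ∈ Finset.Ico 1 m, (⇑φ)^[i] P * L i) + (⇑φ)^[m] P * L m := by
        rw [Finset.sum_Ico_succ_top hm]
    _ = B := by
        have hLm : L m = 1 := hA
        rw [hLm, hP, mul_one, hB]
        have : Finset.Icc 1 (m - 1) = Finset.Ico 1 m := by
          rw [← Finset.Ico_add_one_right_eq_Icc]; congr 1; omega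
        rw [this, add_comm]
end
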